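/- Let r ≥ 1 be an integer and let λ = (λ_1 ≥ λ_2 ≥ … ≥ λ_r ≥ 0) be a partition. In the polynomial ring ℤ[y_1,…,y_r], the determinant det( (1 − y_j)^{λ_i + r − i} · y_j^{i−1} )_{1≤i,j≤r} is divisible by the Vandermonde determinant det( y_j^{i−1} )_{1≤i,j≤r} = ∏_{1≤i<j≤r}(y_j − y_i), and the quotient Q ∈ ℤ[y_1,…,y_r] is a symmetric polynomial whose constant term Q(0,…,0) equals 1 and whose degree in each individual variable y_j is at most λ_1. -/

import Mathlib

open MvPolynomial


/-- Substitution vanishing gives divisibility by `X a - g`. -/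
lemma sub_dvd_of_aeval_eq_zero {σ : Type*} [DecidableEq σ] {R : Type*} [CommRing R]
    {p : MvPolynomial σ R} (a : σ) (g : MvPolynomial σ R)
    (h : aeval (Function.update X a g) p = 0) :
    (X a - g) ∣ p := by
  set I : Ideal (MvPolynomial σ R) := Ideal.span {X a - g} with hI
  rw [← Ideal.mem_span_singleton, ← hI, ← Ideal.Quotient.eq_zero_iff_mem]
  have key : (Ideal.Quotient.mk I).comp ((aeval (Function.update X a g) :
      MvPolynomial σ R →ₐ[R] MvPolynomial σ R) : MvPolynomial σ R →+* MvPolynomial σ R)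
      = Ideal.Quotient.mk I := by
    apply MvPolynomial.ringHom_ext
    · intro c
      simp
    · intro k
      simp only [RingHom.comp_apply, RingHom.coe_coe, aeval_X]
      by_cases hk : k = a
      · subst hk
        rw [Function.update_self]
        have hmem : (X k - g : MvPolynomial σ R) ∈ I := Ideal.subset_span rfl
        have hmem' : (g - X k : MvPolynomial σ R) ∈ I := by
          simpa [neg_sub] using I.neg_mem hmem
        exact (Ideal.Quotient.mk_eq_mk_iff_sub_mem g (X k)).mpr hmem'
      · rw [Function.update_of_ne hk]
  have h2 := RingHom.congr_fun key p
  simp only [RingHom.comp_apply, RingHom.coe_coe] at h2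
  rw [← h2, h, map_zero]


lemma prime_X_sub_X {σ : Type*} [DecidableEq σ] {R : Type*} [CommRing R] [IsDomain R]
    {a b : σ} (h : b ≠ a) :
    Prime (X a - X b : MvPolynomial σ R) := by
  let e : Option {c : σ // c ≠ a} ≃ σ := Equiv.optionSubtypeNe a
  let E : MvPolynomial σ R ≃ₐ[R] Polynomial (MvPolynomial {c : σ // c ≠ a} R) :=
    (renameEquiv R e.symm).trans (optionEquivLeft R {c : σ // c ≠ a})
  rw [← MulEquiv.prime_iff E.toMulEquiv]
  have hE : E (X a - X b) = Polynomial.X - Polynomial.C (X ⟨b, h⟩) := by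
    have h1 : e.symm a = none := Equiv.optionSubtypeNe_symm_self a
    have h2 : e.symm b = some ⟨b, h⟩ := Equiv.optionSubtypeNe_symm_of_ne h
    simp only [E, AlgEquiv.trans_apply, map_sub, renameEquiv_apply, rename_X, h1, h2,
      optionEquivLeft_X_none, optionEquivLeft_X_some]
  rw [show E.toMulEquiv (X a - X b) = E (X a - X b) from rfl, hE]
  exact Polynomial.prime_X_sub_C _


lemma prod_primes_dvd'' {α : Type*} [CommMonoidWithZero α] [IsCancelMulZero α] {ι : Type*}
    (s : Finset ι) (f : ι → α) (n : α)
    (hp : ∀ i ∈ s, Prime (f i))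
    (ha : ∀ i ∈ s, ∀ j ∈ s, i ≠ j → ¬ Associated (f i) (f j))
    (hd : ∀ i ∈ s, f i ∣ n) : (∏ i ∈ s, f i) ∣ n := by
  classical
  induction s using Finset.cons_induction with
  | empty => simpa using one_dvd n
  | cons a s has ih =>
    rw [Finset.prod_cons]
    obtain ⟨m, hm⟩ := ih (fun i hi => hp i (Finset.mem_cons_of_mem hi))
      (fun i hi j hj hij => ha i (Finset.mem_cons_of_mem hi) j (Finset.mem_cons_of_mem hj) hij)
      (fun i hi => hd i (Finset.mem_cons_of_mem hi))
    have hpa : Prime (f a) := hp a (Finset.mem_cons_self a s)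
    have hda : f a ∣ (∏ i ∈ s, f i) * m := hm ▸ hd a (Finset.mem_cons_self a s)
    rcases hpa.dvd_mul.mp hda with hcase | hcase
    · obtain ⟨i, hi, hdvd⟩ := (hpa.dvd_finset_prod_iff f).mp hcase
      exact absurd (hpa.associated_of_dvd (hp i (Finset.mem_cons_of_mem hi)) hdvd)
        (ha a (Finset.mem_cons_self a s) i (Finset.mem_cons_of_mem hi)
          (fun hai => has (hai ▸ hi)))
    · obtain ⟨m', rfl⟩ := hcase
      exact ⟨m', by rw [hm, mul_left_comm, ← mul_assoc]⟩

lemma not_dvd_X_sub_X {r : ℕ} {a b c d : Fin r} (hab : a ≠ b)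
    (hex : ∃ m : Fin r, (m = a ∨ m = b) ∧ m ≠ c ∧ m ≠ d) :
    ¬ (X d - X c : MvPolynomial (Fin r) ℤ) ∣ (X b - X a) := by
  classical
  intro hdvd
  obtain ⟨m, hm, hmc, hmd⟩ := hex
  set v : Fin r → ℤ := fun t => if t = m then 1 else 0 with hv
  have h0 : eval v (X d - X c : MvPolynomial (Fin r) ℤ) = 0 := by
    simp [hv, hmc.symm, hmd.symm, (fun h => hmd h.symm : d ≠ m), (fun h => hmc h.symm : c ≠ m)]
  have h1 : eval v (X b - X a : MvPolynomial (Fin r) ℤ) ≠ 0 := by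
    rcases hm with rfl | rfl
    · simp [hv, (Ne.symm hab : b ≠ _)]
    · simp [hv, hab]
  exact h1 (by
    obtain ⟨q, hq⟩ := hdvd
    rw [hq, map_mul, h0, zero_mul])

lemma exists_m {r : ℕ} {a b c d : Fin r} (hab : a < b) (hcd : c < d)
    (hne : a ≠ c ∨ b ≠ d) :
    ∃ m : Fin r, (m = a ∨ m = b) ∧ m ≠ c ∧ m ≠ d := by
  by_cases h1 : b = d
  · subst h1
    have hac : a ≠ c := hne.resolve_right (fun h => h rfl)
    exact ⟨a, Or.inl rfl, hac, ne_of_lt hab⟩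
  · by_cases h2 : b = c
    · subst h2
      exact ⟨a, Or.inl rfl, ne_of_lt hab, ne_of_lt (hab.trans hcd)⟩
    · exact ⟨b, Or.inr rfl, h2, h1⟩


lemma degreeOf_mul_eq'' {n : ℕ} (j : Fin (n + 1)) (p q : MvPolynomial (Fin (n + 1)) ℤ)
    (hp : p ≠ 0) (hq : q ≠ 0) :
    degreeOf j (p * q) = degreeOf j p + degreeOf j q := by
  classical
  set τ : Equiv.Perm (Fin (n + 1)) := Equiv.swap 0 j with hτ
  have hdeg : ∀ f : MvPolynomial (Fin (n + 1)) ℤ,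
      degreeOf j f = (finSuccEquiv ℤ n (rename τ f)).natDegree := by
    intro f
    rw [natDegree_finSuccEquiv]
    have h := degreeOf_rename_of_injective (τ.injective) (p := f) j
    rw [hτ] at h ⊢
    rw [Equiv.swap_apply_right] at h
    exact h.symm
  have hrp : rename (⇑τ) p ≠ 0 :=
    fun h0 => hp ((map_eq_zero_iff _ (rename_injective _ τ.injective)).mp h0)
  have hrq : rename (⇑τ) q ≠ 0 :=
    fun h0 => hq ((map_eq_zero_iff _ (rename_injective _ τ.injective)).mp h0)
  have hfp : finSuccEquiv ℤ n (rename τ p) ≠ 0 :=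
    fun h0 => hrp ((map_eq_zero_iff _ (finSuccEquiv ℤ n).injective).mp h0)
  have hfq : finSuccEquiv ℤ n (rename τ q) ≠ 0 :=
    fun h0 => hrq ((map_eq_zero_iff _ (finSuccEquiv ℤ n).injective).mp h0)
  rw [hdeg, hdeg, hdeg, map_mul, map_mul, Polynomial.natDegree_mul hfp hfq]

lemma degreeOf_prod_eq'' {n : ℕ} (j : Fin (n + 1)) {ι : Type*} (s : Finset ι)
    (f : ι → MvPolynomial (Fin (n + 1)) ℤ) (hf : ∀ i ∈ s, f i ≠ 0) :
    degreeOf j (∏ i ∈ s, f i) = ∑ i ∈ s, degreeOf j (f i) := by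
  classical
  induction s using Finset.cons_induction with
  | empty =>
    rw [Finset.prod_empty, Finset.sum_empty, show (1 : MvPolynomial (Fin (n + 1)) ℤ) = C 1 from (map_one C).symm, degreeOf_C]
  | cons a s has ih =>
    rw [Finset.prod_cons, Finset.sum_cons,
      degreeOf_mul_eq'' j _ _ (hf a (Finset.mem_cons_self a s))
        (Finset.prod_ne_zero_iff.mpr (fun i hi => hf i (Finset.mem_cons_of_mem hi))),
      ih (fun i hi => hf i (Finset.mem_cons_of_mem hi))]


lemma homogeneousComponent_mul_const {σ : Type*} {R : Type*} [CommRing R]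
    {p q : MvPolynomial σ R} {d : ℕ} (hp : p.IsHomogeneous d) :
    homogeneousComponent d (p * q) = p * C (constantCoeff q) := by
  classical
  set c := constantCoeff q with hc
  have hsplit : p * q = p * C c + p * (q - C c) := by ring
  rw [hsplit, map_add]
  have h1 : homogeneousComponent d (p * C c) = p * C c := by
    have hmem : p * C c ∈ homogeneousSubmodule σ R d := by
      rw [mem_homogeneousSubmodule]
      rw [mul_comm]
      exact hp.C_mul c
    rw [homogeneousComponent_of_mem hmem, if_pos rfl]
  have h2 : homogeneousComponent d (p * (q - C c)) = 0 := by
    apply homogeneousComponent_eq_zero'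
    intro m hm
    have hmm := MvPolynomial.support_mul p (q - C c) hm
    rw [Finset.mem_add] at hmm
    obtain ⟨u, hu, v, hv, rfl⟩ := hmm
    have hud : u.degree = d := by
      rw [Finsupp.degree_eq_weight_one]
      exact hp (mem_support_iff.mp hu)
    have hv0 : v ≠ 0 := by
      intro h0
      subst h0
      have : constantCoeff (q - C c) = 0 := by simp [hc]
      rw [constantCoeff_eq] at this
      exact mem_support_iff.mp hv this
    have hvd : v.degree ≠ 0 := fun h0 => hv0 ((Finsupp.degree_eq_zero_iff v).mp h0)
    have hadd : (u + v).degree = u.degree + v.degree := by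
      simp only [Finsupp.degree_eq_weight_one, map_add]
    rw [hadd, hud]
    omega
  rw [h1, h2, add_zero]

theorem stmt0 (r : ℕ) (hr : 1 ≤ r) (lam : Fin r → ℕ) (hlam : Antitone lam) :
    ∃ Q : MvPolynomial (Fin r) ℤ,
      Matrix.det (Matrix.of fun i j : Fin r =>
          (1 - (X j : MvPolynomial (Fin r) ℤ)) ^ (lam i + (r - 1 - (i : ℕ))) * X j ^ (i : ℕ)) =
        Matrix.det (Matrix.of fun i j : Fin r =>
          (X j : MvPolynomial (Fin r) ℤ) ^ (i : ℕ)) * Q ∧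
      Q.IsSymmetric ∧
      constantCoeff Q = 1 ∧
      ∀ j : Fin r, degreeOf j Q ≤ lam ⟨0, hr⟩ := by
  classical
  obtain ⟨n, rfl⟩ : ∃ n, r = n + 1 := ⟨r - 1, by omega⟩
  set M : Matrix (Fin (n + 1)) (Fin (n + 1)) (MvPolynomial (Fin (n + 1)) ℤ) :=
    Matrix.of fun i j : Fin (n + 1) =>
      (1 - (X j : MvPolynomial (Fin (n + 1)) ℤ)) ^ (lam i + (n + 1 - 1 - (i : ℕ))) *
        X j ^ (i : ℕ) with hM
  set Mv : Matrix (Fin (n + 1)) (Fin (n + 1)) (MvPolynomial (Fin (n + 1)) ℤ) :=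
    Matrix.of fun i j : Fin (n + 1) => (X j : MvPolynomial (Fin (n + 1)) ℤ) ^ (i : ℕ) with hMv
  set S : Finset (Σ _ : Fin (n + 1), Fin (n + 1)) :=
    Finset.univ.sigma fun i => Finset.Ioi i with hS
  -- Vandermonde product formula
  have hV : Mv.det = ∏ x ∈ S, (X x.2 - X x.1 : MvPolynomial (Fin (n + 1)) ℤ) := by
    have hMvT : Mv = Matrix.transpose (Matrix.vandermonde fun j : Fin (n + 1) =>
        (X j : MvPolynomial (Fin (n + 1)) ℤ)) := by
      ext i j
      rfl
    rw [hMvT, Matrix.det_transpose, Matrix.det_vandermonde, hS, Finset.prod_sigma]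
  have hprime : ∀ x ∈ S, Prime ((X x.2 - X x.1 : MvPolynomial (Fin (n + 1)) ℤ)) := by
    intro x hx
    have hlt : x.1 < x.2 := Finset.mem_Ioi.mp (Finset.mem_sigma.mp hx).2
    exact prime_X_sub_X (ne_of_lt hlt)
  have hV0 : Mv.det ≠ 0 := by
    rw [hV]
    exact Finset.prod_ne_zero_iff.mpr fun x hx => (hprime x hx).ne_zero
  -- each linear factor divides det M
  have hdvdN : ∀ x ∈ S, (X x.2 - X x.1 : MvPolynomial (Fin (n + 1)) ℤ) ∣ M.det := by
    intro x hx
    have hlt : x.1 < x.2 := Finset.mem_Ioi.mp (Finset.mem_sigma.mp hx).2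
    have hane : x.1 ≠ x.2 := ne_of_lt hlt
    have h0 : aeval (Function.update X x.2 (X x.1 : MvPolynomial (Fin (n + 1)) ℤ)) M.det = 0 := by
      rw [AlgHom.map_det]
      apply Matrix.det_zero_of_column_eq hane
      intro k
      simp only [hM, AlgHom.mapMatrix_apply, Matrix.map_apply, Matrix.of_apply, map_mul, map_pow,
        map_sub, map_one, aeval_X, Function.update_of_ne hane, Function.update_self]
    exact sub_dvd_of_aeval_eq_zero x.2 (X x.1) h0
  have hassoc : ∀ x ∈ S, ∀ y ∈ S, x ≠ y →
      ¬ Associated (X x.2 - X x.1 : MvPolynomial (Fin (n + 1)) ℤ) (X y.2 - X y.1) := by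
    intro x hx y hy hxy hA
    have hltx : x.1 < x.2 := Finset.mem_Ioi.mp (Finset.mem_sigma.mp hx).2
    have hlty : y.1 < y.2 := Finset.mem_Ioi.mp (Finset.mem_sigma.mp hy).2
    have hne : x.1 ≠ y.1 ∨ x.2 ≠ y.2 := by
      by_contra hcon
      push_neg at hcon
      exact hxy (Sigma.ext hcon.1 (heq_of_eq hcon.2))
    exact not_dvd_X_sub_X (ne_of_lt hltx) (exists_m hltx hlty hne) hA.symm.dvd
  obtain ⟨Q, hQ⟩ : Mv.det ∣ M.det := by
    rw [hV]
    exact prod_primes_dvd'' S _ _ hprime hassoc hdvdN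
  -- the homogeneous degree of the Vandermonde
  set d : ℕ := ∑ i : Fin (n + 1), (i : ℕ) with hd
  have hPhom : ∀ σ : Equiv.Perm (Fin (n + 1)),
      (∏ i : Fin (n + 1), (X i : MvPolynomial (Fin (n + 1)) ℤ) ^ ((σ i : Fin (n + 1)) : ℕ)).IsHomogeneous d := by
    intro σ
    have h := IsHomogeneous.prod Finset.univ
      (fun i : Fin (n + 1) => (X i : MvPolynomial (Fin (n + 1)) ℤ) ^ ((σ i : Fin (n + 1)) : ℕ))
      (fun i => ((σ i : Fin (n + 1)) : ℕ)) (fun i _ => isHomogeneous_X_pow _ _)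
    have hsum : ∑ i : Fin (n + 1), ((σ i : Fin (n + 1)) : ℕ) = d := by
      rw [hd]
      exact Equiv.sum_comp σ (fun i : Fin (n + 1) => (i : ℕ))
    rwa [hsum] at h
  have hMvterm : ∀ σ : Equiv.Perm (Fin (n + 1)),
      (∏ i, Mv (σ i) i) = ∏ i : Fin (n + 1), (X i : MvPolynomial (Fin (n + 1)) ℤ) ^ ((σ i : Fin (n + 1)) : ℕ) :=
    fun σ => Finset.prod_congr rfl fun i _ => rfl
  have hVhom : (Mv.det).IsHomogeneous d := by
    rw [Matrix.det_apply Mv]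
    apply IsHomogeneous.sum
    intro σ _
    rcases Int.units_eq_one_or (Equiv.Perm.sign σ) with hs | hs <;> rw [hs]
    · rw [one_smul, hMvterm σ]
      exact hPhom σ
    · rw [Units.neg_smul, one_smul, hMvterm σ, neg_eq_neg_one_mul,
        show ((-1 : MvPolynomial (Fin (n + 1)) ℤ)) = C (-1) by simp]
      exact (hPhom σ).C_mul (-1)
  have key : ∀ σ : Equiv.Perm (Fin (n + 1)),
      homogeneousComponent d (∏ i, M (σ i) i) = ∏ i, Mv (σ i) i := by
    intro σ
    have hsplit : (∏ i, M (σ i) i) =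
        (∏ i : Fin (n + 1), (X i : MvPolynomial (Fin (n + 1)) ℤ) ^ ((σ i : Fin (n + 1)) : ℕ)) *
          ∏ i : Fin (n + 1), (1 - (X i : MvPolynomial (Fin (n + 1)) ℤ)) ^
            (lam (σ i) + (n + 1 - 1 - ((σ i : Fin (n + 1)) : ℕ))) := by
      rw [← Finset.prod_mul_distrib]
      exact Finset.prod_congr rfl fun i _ => by
        simp only [hM, Matrix.of_apply]
        ring
    rw [hsplit, homogeneousComponent_mul_const (hPhom σ)]
    have hconst : constantCoeff (∏ i : Fin (n + 1),
        (1 - (X i : MvPolynomial (Fin (n + 1)) ℤ)) ^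
          (lam (σ i) + (n + 1 - 1 - ((σ i : Fin (n + 1)) : ℕ)))) = 1 := by
      rw [map_prod]
      simp
    rw [hconst, map_one, mul_one, hMvterm σ]
  have hcompN : homogeneousComponent d M.det = Mv.det := by
    rw [Matrix.det_apply M, map_sum, Matrix.det_apply Mv]
    refine Finset.sum_congr rfl fun σ _ => ?_
    rcases Int.units_eq_one_or (Equiv.Perm.sign σ) with hs | hs <;> rw [hs]
    · rw [one_smul, one_smul, key σ]
    · rw [Units.neg_smul, Units.neg_smul, one_smul, one_smul, map_neg, key σ]
  -- constant coefficient
  have hQc : constantCoeff Q = 1 := by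
    have h1 : homogeneousComponent d M.det = Mv.det * C (constantCoeff Q) := by
      rw [hQ, homogeneousComponent_mul_const hVhom]
    rw [hcompN] at h1
    have h2 : Mv.det * C (1 : ℤ) = Mv.det * C (constantCoeff Q) := by
      rw [map_one, mul_one]
      exact h1
    have h3 := mul_left_cancel₀ hV0 h2
    exact (C_injective _ ℤ h3.symm)
  -- symmetry
  have hsym : Q.IsSymmetric := by
    intro e
    have hmapM : M.map (rename ⇑e) = M.submatrix id ⇑e := by
      ext i jj
      simp [hM, Matrix.map_apply, Matrix.submatrix_apply]
    have hmapMv : Mv.map (rename ⇑e) = Mv.submatrix id ⇑e := by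
      ext i jj
      simp [hMv, Matrix.map_apply, Matrix.submatrix_apply]
    have hMe : rename ⇑e M.det =
        ((Equiv.Perm.sign e : ℤ) : MvPolynomial (Fin (n + 1)) ℤ) * M.det := by
      rw [AlgHom.map_det, AlgHom.mapMatrix_apply, hmapM, Matrix.det_permute' e M]
    have hVe : rename ⇑e Mv.det =
        ((Equiv.Perm.sign e : ℤ) : MvPolynomial (Fin (n + 1)) ℤ) * Mv.det := by
      rw [AlgHom.map_det, AlgHom.mapMatrix_apply, hmapMv, Matrix.det_permute' e Mv]
    have hcast : ((Equiv.Perm.sign e : ℤ) : MvPolynomial (Fin (n + 1)) ℤ) ≠ 0 := by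
      rcases Int.units_eq_one_or (Equiv.Perm.sign e) with hs | hs <;> rw [hs] <;> simp
    have hmain := congrArg (rename ⇑e) hQ
    rw [map_mul, hMe, hVe, hQ, mul_assoc] at hmain
    have h3 := mul_left_cancel₀ hcast hmain
    exact (mul_left_cancel₀ hV0 h3).symm
  refine ⟨Q, hQ, hsym, hQc, ?_⟩
  -- degree bound
  intro j
  have hQ0 : Q ≠ 0 := fun h0 => by simp [h0] at hQc
  -- degreeOf j of the Vandermonde determinant is exactly n
  have hfac : ∀ x ∈ S, degreeOf j (X x.2 - X x.1 : MvPolynomial (Fin (n + 1)) ℤ) =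
      (if x.1 = j then 1 else 0) + (if x.2 = j then 1 else 0) := by
    intro x hx
    have hlt : x.1 < x.2 := Finset.mem_Ioi.mp (Finset.mem_sigma.mp hx).2
    have hub : ∀ a b : Fin (n + 1), degreeOf j (X b - X a : MvPolynomial (Fin (n + 1)) ℤ) ≤
        max (if j = b then 1 else 0) (if j = a then 1 else 0) := by
      intro a b
      refine le_trans (degreeOf_sub_le j _ _) ?_
      rw [degreeOf_X, degreeOf_X]
    have hlb : ∀ a b : Fin (n + 1), a ≠ b → (j = a ∨ j = b) →
        1 ≤ degreeOf j (X b - X a : MvPolynomial (Fin (n + 1)) ℤ) := by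
      intro a b hab hj
      have hmem : Finsupp.single j 1 ∈ (X b - X a : MvPolynomial (Fin (n + 1)) ℤ).support := by
        rw [mem_support_iff, coeff_sub, coeff_X', coeff_X']
        rcases hj with rfl | rfl
        · rw [if_neg (fun h => hab ((by simpa [Finsupp.single_eq_single_iff] using h : b = j)).symm),
            if_pos rfl]
          norm_num
        · rw [if_pos rfl,
            if_neg (fun h => hab (by simpa [Finsupp.single_eq_single_iff] using h : a = j))]
          norm_num
      have := monomial_le_degreeOf j hmem
      simpa using this
    by_cases h1 : x.1 = j
    · have h2 : x.2 ≠ j := fun h => (h1 ▸ h ▸ hlt).false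
      rw [if_pos h1, if_neg h2]
      refine le_antisymm ?_ ?_
      · refine le_trans (hub x.1 x.2) ?_
        rw [if_neg (fun h => h2 h.symm), if_pos h1.symm]
        omega
      · exact hlb x.1 x.2 (ne_of_lt hlt) (Or.inl h1.symm)
    · by_cases h2 : x.2 = j
      · rw [if_neg h1, if_pos h2]
        refine le_antisymm ?_ ?_
        · refine le_trans (hub x.1 x.2) ?_
          rw [if_pos h2.symm, if_neg (fun h => h1 h.symm)]
          omega
        · exact hlb x.1 x.2 (ne_of_lt hlt) (Or.inr h2.symm)
      · rw [if_neg h1, if_neg h2]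
        refine Nat.le_zero.mp ?_
        refine le_trans (hub x.1 x.2) ?_
        rw [if_neg (fun h => h2 h.symm), if_neg (fun h => h1 h.symm)]
        omega
  have hdegV : degreeOf j Mv.det = n := by
    rw [hV, degreeOf_prod_eq'' j S _ (fun x hx => (hprime x hx).ne_zero),
      Finset.sum_congr rfl hfac, Finset.sum_add_distrib, hS, Finset.sum_sigma, Finset.sum_sigma]
    have hA : ∑ i : Fin (n + 1), ∑ k ∈ Finset.Ioi i, (if i = j then 1 else 0) = n - (j : ℕ) := by
      have : ∀ i : Fin (n + 1), ∑ k ∈ Finset.Ioi i, (if i = j then 1 else 0) =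
          (if i = j then (Finset.Ioi i).card else 0) := by
        intro i
        split <;> simp [Finset.sum_const]
      rw [Finset.sum_congr rfl fun i _ => this i, Finset.sum_ite_eq' Finset.univ j
        (fun i => (Finset.Ioi i).card), if_pos (Finset.mem_univ j), Fin.card_Ioi]
      omega
    have hB : ∑ i : Fin (n + 1), ∑ k ∈ Finset.Ioi i, (if k = j then 1 else 0) = (j : ℕ) := by
      have : ∀ i : Fin (n + 1), ∑ k ∈ Finset.Ioi i, (if k = j then 1 else 0) =
          (if i < j then 1 else 0) := by
        intro i
        rw [Finset.sum_ite_eq' (Finset.Ioi i) j (fun _ => 1)]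
        simp [Finset.mem_Ioi]
      rw [Finset.sum_congr rfl fun i _ => this i]
      rw [Finset.sum_ite, Finset.sum_const, Finset.sum_const]
      simp only [smul_eq_mul, mul_one, mul_zero, add_zero]
      have : Finset.univ.filter (fun i : Fin (n + 1) => i < j) = Finset.Iio j := by
        ext i
        simp
      rw [this, Fin.card_Iio]
    rw [hA, hB]
    have := j.is_le
    omega
  -- degree bound for det M
  have hdegN : degreeOf j M.det ≤ lam ⟨0, hr⟩ + n := by
    rw [Matrix.det_apply M]
    refine le_trans (degreeOf_sum_le j _ _) ?_
    rw [Finset.sup_le_iff]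
    intro σ _
    have hsmul : degreeOf j (Equiv.Perm.sign σ • ∏ i, M (σ i) i) =
        degreeOf j (∏ i, M (σ i) i) := by
      rcases Int.units_eq_one_or (Equiv.Perm.sign σ) with hs | hs <;> rw [hs]
      · rw [one_smul]
      · rw [Units.neg_smul, one_smul, degreeOf_neg]
    rw [hsmul]
    refine le_trans (degreeOf_prod_le j _ _) ?_
    have hentry : ∀ i : Fin (n + 1), degreeOf j (M (σ i) i) ≤
        (if i = j then lam ⟨0, hr⟩ + n else 0) := by
      intro i
      have hMe : M (σ i) i = (1 - (X i : MvPolynomial (Fin (n + 1)) ℤ)) ^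
          (lam (σ i) + (n + 1 - 1 - ((σ i : Fin (n + 1)) : ℕ))) * X i ^ ((σ i : Fin (n + 1)) : ℕ) := rfl
      rw [hMe]
      have hone : degreeOf j (1 : MvPolynomial (Fin (n + 1)) ℤ) = 0 := by
        rw [show (1 : MvPolynomial (Fin (n + 1)) ℤ) = C 1 from (map_one C).symm, degreeOf_C]
      by_cases hij : i = j
      · subst hij
        rw [if_pos rfl]
        refine le_trans (degreeOf_mul_le _ _ _) ?_
        have hb1 : degreeOf i ((1 - (X i : MvPolynomial (Fin (n + 1)) ℤ)) ^
            (lam (σ i) + (n + 1 - 1 - ((σ i : Fin (n + 1)) : ℕ)))) ≤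
            lam (σ i) + (n + 1 - 1 - ((σ i : Fin (n + 1)) : ℕ)) := by
          refine le_trans (degreeOf_pow_le _ _ _) ?_
          have : degreeOf i (1 - (X i : MvPolynomial (Fin (n + 1)) ℤ)) ≤ 1 := by
            refine le_trans (degreeOf_sub_le _ _ _) ?_
            rw [hone, degreeOf_X, if_pos rfl]
            omega
          calc (lam (σ i) + (n + 1 - 1 - ((σ i : Fin (n + 1)) : ℕ))) *
              degreeOf i (1 - (X i : MvPolynomial (Fin (n + 1)) ℤ)) ≤
              (lam (σ i) + (n + 1 - 1 - ((σ i : Fin (n + 1)) : ℕ))) * 1 :=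
                Nat.mul_le_mul_left _ this
            _ = _ := by omega
        have hb2 : degreeOf i ((X i : MvPolynomial (Fin (n + 1)) ℤ) ^ ((σ i : Fin (n + 1)) : ℕ)) ≤
            ((σ i : Fin (n + 1)) : ℕ) := by
          refine le_trans (degreeOf_pow_le _ _ _) ?_
          rw [degreeOf_X, if_pos rfl]
          omega
        have hlam' : lam (σ i) ≤ lam ⟨0, hr⟩ := hlam (by
          change (0 : ℕ) ≤ ((σ i : Fin (n + 1)) : ℕ)
          omega)
        have hs_le : ((σ i : Fin (n + 1)) : ℕ) ≤ n := (σ i).is_le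
        omega
      · rw [if_neg hij]
        have hX : degreeOf j (X i : MvPolynomial (Fin (n + 1)) ℤ) = 0 := by
          rw [degreeOf_X, if_neg (fun h => hij h.symm)]
        have hsub : degreeOf j (1 - (X i : MvPolynomial (Fin (n + 1)) ℤ)) = 0 := by
          have h' := degreeOf_sub_le j (1 : MvPolynomial (Fin (n + 1)) ℤ) (X i)
          rw [hone, hX] at h'
          omega
        have hp1 := degreeOf_pow_le j (1 - (X i : MvPolynomial (Fin (n + 1)) ℤ))
          (lam (σ i) + (n + 1 - 1 - ((σ i : Fin (n + 1)) : ℕ)))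
        have hp2 := degreeOf_pow_le j (X i : MvPolynomial (Fin (n + 1)) ℤ)
          ((σ i : Fin (n + 1)) : ℕ)
        have hm := degreeOf_mul_le j
          ((1 - (X i : MvPolynomial (Fin (n + 1)) ℤ)) ^
            (lam (σ i) + (n + 1 - 1 - ((σ i : Fin (n + 1)) : ℕ))))
          ((X i : MvPolynomial (Fin (n + 1)) ℤ) ^ ((σ i : Fin (n + 1)) : ℕ))
        rw [hsub] at hp1
        rw [hX] at hp2
        omega
    refine le_trans (Finset.sum_le_sum fun i _ => hentry i) ?_
    rw [Finset.sum_ite_eq' Finset.univ j (fun _ => lam ⟨0, hr⟩ + n), if_pos (Finset.mem_univ j)]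
  -- conclude
  have hmul := degreeOf_mul_eq'' j Mv.det Q hV0 hQ0
  rw [← hQ, hdegV] at hmul
  omega
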